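/- arXiv:1206.6019 — 3 statements merged into one kernel-verified Lean document; each statement's English description precedes it below -/
import Mathlib

section
/- Let X be a smooth complex projective Calabi-Yau variety of dimension d ≥ 2, let E be a spherical object of D(X), and let G be an object of D(X) with Φ_E(G) ≅ G[−d]. Then d_E(G) = Σ_i dim Hom(E, G[i]) is an even integer; in particular d_E(G) ≠ 1. -/
/-!
This file formalizes a statement from "Commuting reflection functors and
orthogonal spherical objects".  Mathlib does not have bounded derived categories
of coherent sheaves on smooth projective varieties, so the geometric setting is
axiomatized: `T` plays the role of the bounded derived category `D(X)` of a
smooth complex projective variety `X` — a ℂ-linear triangulated category with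
finite-dimensional, bounded graded Hom's — and the Calabi-Yau condition is
expressed by Serre duality in the form of a perfect trace pairing
`Hom(A,B) × Hom(B,A⟦d⟧) → ℂ`.
-/

open CategoryTheory Limits Pretriangulated Module

universe v u

namespace SphericalPaper

variable (T : Type u) [Category.{v} T] [Preadditive T] [Linear ℂ T]
  [HasZeroObject T] [HasShift T ℤ] [∀ n : ℤ, (shiftFunctor T n).Additive]
  [Pretriangulated T] [HasFiniteBiproducts T]

/-- Hom-finiteness and boundedness of the graded Hom's, as holds in the bounded
derived category of coherent sheaves on a smooth complex projective variety. -/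
class HomFiniteBounded : Prop where
  finite : ∀ A B : T, FiniteDimensional ℂ (A ⟶ B)
  bounded : ∀ A B : T, ∃ N : ℕ, ∀ i : ℤ, (N : ℤ) < |i| → ∀ f : A ⟶ B⟦i⟧, f = 0

/-- The Calabi-Yau condition in dimension `d`: the `d`-th shift is a Serre
functor, expressed by trace functionals inducing a perfect pairing
`Hom(A,B) × Hom(B,A⟦d⟧) → ℂ` (Serre duality `Hom(A,B) ≅ Hom(B,A⟦d⟧)^*`). -/
class CalabiYau (d : ℤ) : Type (max u v) where
  tr : ∀ A : T, (A ⟶ A⟦d⟧) →ₗ[ℂ] ℂ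
  nondegen_left : ∀ (A B : T) (f : A ⟶ B),
    (∀ g : B ⟶ A⟦d⟧, tr A (f ≫ g) = 0) → f = 0
  nondegen_right : ∀ (A B : T) (g : B ⟶ A⟦d⟧),
    (∀ f : A ⟶ B, tr A (f ≫ g) = 0) → g = 0

variable {T}

/-- An object `E` is spherical (for dimension `d`) if `Hom(E,E⟦i⟧)` is
one-dimensional for `i = 0` and `i = d` and vanishes for all other `i`. -/
def IsSpherical (d : ℤ) (E : T) : Prop :=
  finrank ℂ (E ⟶ E⟦(0 : ℤ)⟧) = 1 ∧ finrank ℂ (E ⟶ E⟦d⟧) = 1 ∧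
    ∀ i : ℤ, i ≠ 0 → i ≠ d → ∀ f : E ⟶ E⟦i⟧, f = 0

/-- The spherical twist `Φ_E` attached to a spherical object `E`, presented by
its defining natural distinguished triangle
`Φ_E(G) → RHom(E,G) ⊗_ℂ E → G → Φ_E(G)[1]` :
`Φ` is a triangulated autoequivalence, `Ψ` is the functor `G ↦ RHom(E,G) ⊗_ℂ E`
(each `Ψ(G)` is exhibited as a finite biproduct of shifts `E⟦-i⟧` indexed by
bases of the spaces `Hom(E,G⟦i⟧)`, the natural map `Ψ(G) → G` restricting to
evaluation of the corresponding basis vectors, i.e. it is the evaluation map,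
which is the Fourier-Mukai description of the twist along the spherical
object). -/
structure SphericalTwist (E : T) where
  Φ : T ⥤ T
  equiv : Φ.IsEquivalence
  commShift : Φ.CommShift ℤ
  triangulated : letI := commShift; Φ.IsTriangulated
  Ψ : T ⥤ T
  α : Φ ⟶ Ψ
  ε : Ψ ⟶ 𝟭 T
  δ : 𝟭 T ⟶ Φ ⋙ shiftFunctor T (1 : ℤ)
  dist : ∀ G : T, Triangle.mk (α.app G) (ε.app G) (δ.app G) ∈ distTriang T
  m : T → ℕ
  deg : ∀ G : T, Fin (m G) → ℤ
  decomp : ∀ G : T, Ψ.obj G ≅ ⨁ (fun p : Fin (m G) => E⟦-(deg G p)⟧)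
  bas : ∀ (G : T) (n : ℤ), Basis {p : Fin (m G) // deg G p = n} ℂ (E ⟶ G⟦n⟧)
  eval : ∀ (G : T) (p : Fin (m G)),
    biproduct.ι (fun q : Fin (m G) => E⟦-(deg G q)⟧) p ≫ (decomp G).inv ≫ ε.app G =
      ((shiftEquiv' T (-(deg G p)) (deg G p) (neg_add_cancel _)).toAdjunction.homEquiv
        E G).symm (bas G (deg G p) ⟨p, rfl⟩)

/-- `dHom E G = Σᵢ dim Hom(E, G⟦i⟧)`, the total dimension of the graded
Hom's from `E` to `G` (the quantity `d_E(G)` of the paper). -/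
noncomputable def dHom (E G : T) : ℕ := ∑ᶠ i : ℤ, finrank ℂ (E ⟶ G⟦i⟧)

set_option linter.unusedSectionVars false

instance (priority := 900) [HomFiniteBounded T] (A B : T) : FiniteDimensional ℂ (A ⟶ B) :=
  HomFiniteBounded.finite A B

/-- sign `(-1)^i` as an integer -/
def sg (i : ℤ) : ℤ := (Int.negOnePow i : ℤ)

lemma sg_add (i j : ℤ) : sg (i + j) = sg i * sg j := by
  simp [sg, Int.negOnePow_add]

lemma sg_neg (i : ℤ) : sg (-i) = sg i := by simp [sg, Int.negOnePow_neg]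

lemma sg_sub (i j : ℤ) : sg (i - j) = sg i * sg j := by
  simp [sg, Int.negOnePow_sub]

lemma sg_eq_one_or (i : ℤ) : sg i = 1 ∨ sg i = -1 := by
  rcases Int.even_or_odd i with h | h
  · exact Or.inl (by simp [sg, Int.negOnePow_even _ h])
  · exact Or.inr (by simp [sg, Int.negOnePow_odd _ h])

lemma sg_even {i : ℤ} (h : Even i) : sg i = 1 := by simp [sg, Int.negOnePow_even _ h]
lemma sg_odd {i : ℤ} (h : Odd i) : sg i = -1 := by simp [sg, Int.negOnePow_odd _ h]

/-- the graded hom rank function -/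
noncomputable def hr (A B : T) (i : ℤ) : ℤ := (finrank ℂ (A ⟶ B⟦i⟧) : ℤ)

lemma hr_eq_zero_of_all_zero {A B : T} {i : ℤ} (h : ∀ f : A ⟶ B⟦i⟧, f = 0) :
    hr A B i = 0 := by
  have : Subsingleton (A ⟶ B⟦i⟧) := ⟨fun a b => (h a).trans (h b).symm⟩
  simp [hr, finrank_zero_of_subsingleton]

lemma support_hr_finite [HomFiniteBounded T] (A B : T) :
    (Function.support (hr A B)).Finite := by
  obtain ⟨N, hN⟩ := HomFiniteBounded.bounded A B
  apply Set.Finite.subset (Set.finite_Icc (-(N : ℤ)) N)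
  intro i hi
  rw [Function.mem_support] at hi
  rw [Set.mem_Icc]
  by_contra hc
  push_neg at hc
  apply hi
  apply hr_eq_zero_of_all_zero
  apply hN
  rcases le_or_gt (-(N:ℤ)) i with h1 | h1
  · exact lt_abs.mpr (Or.inl (hc h1))
  · exact lt_abs.mpr (Or.inr (by omega))

/-- Euler characteristic of the graded homs -/
noncomputable def eu (A B : T) : ℤ := ∑ᶠ i : ℤ, sg i * hr A B i

lemma support_sg_hr (A B : T) :
    Function.support (fun i => sg i * hr A B i) ⊆ Function.support (hr A B) := by
  intro i hi
  rw [Function.mem_support] at hi ⊢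
  exact fun h => hi (by rw [h, mul_zero])

lemma support_sg_hr_finite [HomFiniteBounded T] (A B : T) :
    (Function.support (fun i => sg i * hr A B i)).Finite :=
  (support_hr_finite A B).subset (support_sg_hr A B)

lemma hom_finrank_congr {A A' B B' : T} (eA : A ≅ A') (eB : B ≅ B') :
    finrank ℂ (A ⟶ B) = finrank ℂ (A' ⟶ B') :=
  LinearEquiv.finrank_eq (Linear.homCongr ℂ eA eB)

lemma hr_congr_right {B B' : T} (e : B ≅ B') (A : T) (i : ℤ) :
    hr A B i = hr A B' i := by
  unfold hr
  rw [hom_finrank_congr (Iso.refl A) ((shiftFunctor T i).mapIso e)]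

lemma hr_congr_left {A A' : T} (e : A ≅ A') (B : T) (i : ℤ) :
    hr A B i = hr A' B i := by
  unfold hr
  rw [hom_finrank_congr e (Iso.refl (B⟦i⟧))]

lemma eu_congr_right {B B' : T} (e : B ≅ B') (A : T) : eu A B = eu A B' :=
  finsum_congr fun i => by rw [hr_congr_right e]

lemma hr_shift (A B : T) (n i : ℤ) : hr A (B⟦n⟧) i = hr A B (n + i) := by
  unfold hr
  congr 1
  exact hom_finrank_congr (Iso.refl A) (((shiftFunctorAdd' T n i (n+i) rfl).app B).symm)

lemma eu_shift [HomFiniteBounded T] (A B : T) (n : ℤ) : eu A (B⟦n⟧) = sg n * eu A B := by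
  unfold eu
  have h1 : ∀ i : ℤ, sg i * hr A (B⟦n⟧) i
      = (fun j => sg (j - n) * hr A B j) ((Equiv.addLeft n) i) := by
    intro i
    rw [hr_shift]
    simp only [Equiv.coe_addLeft]
    congr 2
    omega
  rw [finsum_congr h1]
  rw [finsum_comp_equiv (Equiv.addLeft n) (f := fun j => sg (j - n) * hr A B j)]
  have h2 : ∀ j : ℤ, sg (j - n) * hr A B j = sg n * (sg j * hr A B j) := by
    intro j
    rw [sg_sub]
    ring
  rw [finsum_congr h2]
  exact (mul_finsum _ _).symm


section LES

variable (X : T) (Tr : Triangle T)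

lemma exact_of_dist (hTr : Tr ∈ distTriang T) :
    LinearMap.range (Linear.rightComp ℂ X Tr.mor₁)
      = LinearMap.ker (Linear.rightComp ℂ X Tr.mor₂) := by
  ext f
  simp only [LinearMap.mem_range, LinearMap.mem_ker, Linear.rightComp_apply]
  constructor
  · rintro ⟨g, rfl⟩
    rw [Category.assoc, comp_distTriang_mor_zero₁₂ _ hTr, comp_zero]
  · intro hf
    obtain ⟨g, hg⟩ := Triangle.coyoneda_exact₂ Tr hTr f hf
    exact ⟨g, hg.symm⟩

lemma ker_rightComp_units_smul {Y Z : T} (c : ℤˣ) (φ : Y ⟶ Z) :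
    LinearMap.ker (Linear.rightComp ℂ X (c • φ))
      = LinearMap.ker (Linear.rightComp ℂ X φ) := by
  ext f
  simp only [LinearMap.mem_ker, Linear.rightComp_apply, Linear.comp_units_smul]
  rcases Int.units_eq_one_or c with rfl | rfl
  · simp
  · simp

lemma range_rightComp_units_smul {Y Z : T} (c : ℤˣ) (φ : Y ⟶ Z) :
    LinearMap.range (Linear.rightComp ℂ X (c • φ))
      = LinearMap.range (Linear.rightComp ℂ X φ) := by
  ext f
  simp only [LinearMap.mem_range, Linear.rightComp_apply, Linear.comp_units_smul]
  rcases Int.units_eq_one_or c with rfl | rfl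
  · simp
  · constructor
    · rintro ⟨g, rfl⟩; exact ⟨-g, by simp⟩
    · rintro ⟨g, rfl⟩; exact ⟨-g, by simp⟩

lemma ker_rightComp_neg {Y Z : T} (φ : Y ⟶ Z) :
    LinearMap.ker (Linear.rightComp ℂ X (-φ))
      = LinearMap.ker (Linear.rightComp ℂ X φ) := by
  have := ker_rightComp_units_smul X (-1 : ℤˣ) φ
  simpa using this

lemma ker_rightComp_comp_iso {Y Z Z' : T} (φ : Y ⟶ Z) (c : Z ⟶ Z') [IsIso c] :
    LinearMap.ker (Linear.rightComp ℂ X (φ ≫ c))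
      = LinearMap.ker (Linear.rightComp ℂ X φ) := by
  ext f
  simp only [LinearMap.mem_ker, Linear.rightComp_apply]
  rw [← Category.assoc]
  constructor
  · intro h
    have := congrArg (fun t => t ≫ inv c) h
    simpa using this
  · intro h; rw [h, zero_comp]

lemma finrank_range_rightComp_comp_iso {Y Z Z' : T} (φ : Y ⟶ Z) (c : Z ⟶ Z') [IsIso c] :
    finrank ℂ (LinearMap.range (Linear.rightComp ℂ X (φ ≫ c)))
      = finrank ℂ (LinearMap.range (Linear.rightComp ℂ X φ)) := by
  have hcomp : Linear.rightComp ℂ X (φ ≫ c)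
      = (Linear.homCongr ℂ (Iso.refl X) (asIso c)).toLinearMap.comp
          (Linear.rightComp ℂ X φ) := by
    ext f
    simp [Linear.homCongr, Linear.rightComp_apply, Linear.leftComp_apply]
  rw [hcomp, LinearMap.range_comp]
  exact LinearEquiv.finrank_map_eq _ _

end LES


noncomputable def postEquiv (X : T) {Z Z' : T} (c : Z ≅ Z') : (X ⟶ Z) ≃ₗ[ℂ] (X ⟶ Z') where
  toFun f := f ≫ c.hom
  map_add' f g := by rw [Preadditive.add_comp]
  map_smul' r f := by dsimp; rw [Linear.smul_comp]
  invFun f := f ≫ c.inv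
  left_inv f := by simp
  right_inv f := by simp

@[simp] lemma postEquiv_apply (X : T) {Z Z' : T} (c : Z ≅ Z') (f : X ⟶ Z) :
    postEquiv X c f = f ≫ c.hom := rfl

section Maps

variable (X : T) (Tr : Triangle T)

/-- postcomposition with `mor₁⟦i⟧` -/
noncomputable def uu (i : ℤ) : (X ⟶ Tr.obj₁⟦i⟧) →ₗ[ℂ] (X ⟶ Tr.obj₂⟦i⟧) :=
  Linear.rightComp ℂ X (Tr.mor₁⟦i⟧')

noncomputable def vv (i : ℤ) : (X ⟶ Tr.obj₂⟦i⟧) →ₗ[ℂ] (X ⟶ Tr.obj₃⟦i⟧) :=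
  Linear.rightComp ℂ X (Tr.mor₂⟦i⟧')

noncomputable def ww (i : ℤ) : (X ⟶ Tr.obj₃⟦i⟧) →ₗ[ℂ] (X ⟶ Tr.obj₁⟦i+1⟧) :=
  Linear.rightComp ℂ X
    ((Tr.mor₃⟦i⟧' ≫ (shiftFunctorComm T 1 i).hom.app Tr.obj₁)
      ≫ ((shiftFunctorAdd' T i 1 (i+1) rfl).app Tr.obj₁).inv)

lemma sDist (hTr : Tr ∈ distTriang T) (i : ℤ) : (Triangle.shiftFunctor T i).obj Tr ∈ distTriang T := by
  have := Pretriangulated.Triangle.shift_distinguished Tr hTr i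
  rwa [Triangle.shiftFunctor_eq] at this

lemma exact₂ (hTr : Tr ∈ distTriang T) (i : ℤ) : LinearMap.range (uu X Tr i) = LinearMap.ker (vv X Tr i) := by
  have h := exact_of_dist X _ (sDist Tr hTr i)
  change LinearMap.range (Linear.rightComp ℂ X (i.negOnePow • Tr.mor₁⟦i⟧')) = LinearMap.ker (Linear.rightComp ℂ X (i.negOnePow • Tr.mor₂⟦i⟧')) at h
  rw [range_rightComp_units_smul, ker_rightComp_units_smul] at h
  exact h

lemma exact₃ (hTr : Tr ∈ distTriang T) (i : ℤ) : LinearMap.range (vv X Tr i) = LinearMap.ker (ww X Tr i) := by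
  have h := exact_of_dist X _ (rot_of_distTriang _ (sDist Tr hTr i))
  change LinearMap.range (Linear.rightComp ℂ X (i.negOnePow • Tr.mor₂⟦i⟧')) = LinearMap.ker (Linear.rightComp ℂ X (i.negOnePow • (Tr.mor₃⟦i⟧' ≫ (shiftFunctorComm T 1 i).hom.app Tr.obj₁))) at h
  rw [range_rightComp_units_smul, ker_rightComp_units_smul] at h
  unfold ww
  rw [ker_rightComp_comp_iso]
  exact h

lemma seam (hTr : Tr ∈ distTriang T) (i j : ℤ) (hij : i + 1 = j) :
    finrank ℂ (LinearMap.ker (uu X Tr j)) = finrank ℂ (LinearMap.range (ww X Tr i)) := by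
  subst hij
  unfold ww
  rw [finrank_range_rightComp_comp_iso]
  have h := exact_of_dist X _ (rot_of_distTriang _ (rot_of_distTriang _ (sDist Tr hTr i)))
  change LinearMap.range (Linear.rightComp ℂ X (i.negOnePow • (Tr.mor₃⟦i⟧' ≫ (shiftFunctorComm T 1 i).hom.app Tr.obj₁))) = LinearMap.ker (Linear.rightComp ℂ X (-((i.negOnePow • Tr.mor₁⟦i⟧')⟦1⟧'))) at h
  rw [range_rightComp_units_smul] at h
  rw [h, ker_rightComp_neg, Functor.map_units_smul, ker_rightComp_units_smul]
  set κ₁ := ((shiftFunctorAdd' T i 1 (i+1) rfl).app Tr.obj₁) with hκ₁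
  set κ₂ := ((shiftFunctorAdd' T i 1 (i+1) rfl).app Tr.obj₂) with hκ₂
  have nat : (Tr.mor₁⟦i⟧')⟦1⟧' ≫ κ₂.inv = κ₁.inv ≫ Tr.mor₁⟦i+1⟧' := by
    have := (shiftFunctorAdd' T i 1 (i+1) rfl).inv.naturality Tr.mor₁
    simpa [κ₁, κ₂] using this
  set e₁ := postEquiv X κ₁.symm with he₁
  set e₂ := postEquiv X κ₂.symm with he₂
  have key : ∀ g : X ⟶ (shiftFunctor T (1:ℤ)).obj ((shiftFunctor T i).obj Tr.obj₁),
      uu X Tr (i+1) (e₁ g)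
        = e₂ (Linear.rightComp ℂ X ((shiftFunctor T (1:ℤ)).map ((shiftFunctor T i).map Tr.mor₁)) g) := by
    intro g
    show (g ≫ κ₁.inv) ≫ Tr.mor₁⟦i+1⟧'
        = (g ≫ (shiftFunctor T (1:ℤ)).map ((shiftFunctor T i).map Tr.mor₁)) ≫ κ₂.inv
    rw [Category.assoc, Category.assoc, nat]
  have hker : LinearMap.ker (uu X Tr (i+1))
      = Submodule.map e₁.toLinearMap
          (LinearMap.ker (Linear.rightComp ℂ X
            ((shiftFunctor T (1:ℤ)).map ((shiftFunctor T i).map Tr.mor₁)))) := by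
    ext f
    simp only [Submodule.mem_map, LinearMap.mem_ker, LinearEquiv.coe_coe, LinearEquiv.coe_toLinearMap]
    constructor
    · intro hf
      refine ⟨e₁.symm f, ?_, by simp⟩
      apply e₂.injective
      rw [map_zero, ← key]
      simpa using hf
    · rintro ⟨g, hg, rfl⟩
      have hk := key g
      rw [hg, map_zero] at hk
      simpa using hk
  rw [hker]
  exact LinearEquiv.finrank_map_eq _ _


noncomputable def rr (i : ℤ) : ℤ := (finrank ℂ (LinearMap.range (ww X Tr i)) : ℤ)

lemma rr_nonneg (i : ℤ) : 0 ≤ rr X Tr i := Int.natCast_nonneg _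

lemma rr_le [HomFiniteBounded T] (i : ℤ) : rr X Tr i ≤ hr X Tr.obj₃ i := by
  unfold rr hr
  exact_mod_cast LinearMap.finrank_range_le (ww X Tr i)

lemma support_rr_finite [HomFiniteBounded T] : (Function.support (rr X Tr)).Finite := by
  apply (support_hr_finite X Tr.obj₃).subset
  intro i hi
  rw [Function.mem_support] at hi ⊢
  intro h0
  apply hi
  have h1 := rr_le X Tr i
  have h2 := rr_nonneg X Tr i
  omega

lemma rank_identity [HomFiniteBounded T] (hTr : Tr ∈ distTriang T) (i : ℤ) :
    hr X Tr.obj₁ i + hr X Tr.obj₃ i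
      = hr X Tr.obj₂ i + rr X Tr (i-1) + rr X Tr i := by
  have hb := (LinearMap.finrank_range_add_finrank_ker (vv X Tr i)).symm
  rw [← exact₂ X Tr hTr i] at hb
  have hc := (LinearMap.finrank_range_add_finrank_ker (ww X Tr i)).symm
  rw [← exact₃ X Tr hTr i] at hc
  have ha := (LinearMap.finrank_range_add_finrank_ker (uu X Tr i)).symm
  rw [seam X Tr hTr (i-1) i (by omega)] at ha
  unfold hr rr
  rw [ha, hb, hc]
  push_cast
  ring

lemma eu_triangle [HomFiniteBounded T] (hTr : Tr ∈ distTriang T) :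
    eu X Tr.obj₂ = eu X Tr.obj₁ + eu X Tr.obj₃ := by
  have h1 := support_sg_hr_finite X Tr.obj₁
  have h2 := support_sg_hr_finite X Tr.obj₂
  have h3 := support_sg_hr_finite X Tr.obj₃
  have hrr : (Function.support (fun i => sg i * rr X Tr i)).Finite := by
    apply (support_rr_finite X Tr).subset
    intro i hi
    rw [Function.mem_support] at hi ⊢
    exact fun h => hi (by rw [h, mul_zero])
  have hrr' : (Function.support (fun i => sg i * rr X Tr (i-1))).Finite := by
    have : (Function.support (fun i => sg i * rr X Tr (i-1)))
        ⊆ (fun j => j + 1) '' (Function.support (rr X Tr)) := by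
      intro i hi
      rw [Function.mem_support] at hi
      refine ⟨i - 1, ?_, by simp⟩
      rw [Function.mem_support]
      exact fun h => hi (by rw [h, mul_zero])
    exact Set.Finite.subset ((support_rr_finite X Tr).image _) this
  have cancel : ∑ᶠ i : ℤ, sg i * rr X Tr (i-1) = - ∑ᶠ i : ℤ, sg i * rr X Tr i := by
    have step : ∀ j : ℤ, (fun i => sg i * rr X Tr (i-1)) ((Equiv.addRight (1:ℤ)) j)
        = - (sg j * rr X Tr j) := by
      intro j
      simp only [Equiv.coe_addRight]
      rw [add_sub_cancel_right, sg_add, sg_odd odd_one]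
      ring
    rw [← finsum_comp_equiv (Equiv.addRight (1:ℤ)) (f := fun i => sg i * rr X Tr (i-1))]
    rw [finsum_congr step]
    exact finsum_neg_distrib _
  have main : eu X Tr.obj₁ + eu X Tr.obj₃
      = eu X Tr.obj₂ + (∑ᶠ i : ℤ, sg i * rr X Tr (i-1) + ∑ᶠ i : ℤ, sg i * rr X Tr i) := by
    unfold eu
    rw [← finsum_add_distrib h1 h3, ← finsum_add_distrib hrr' hrr,
      ← finsum_add_distrib h2 (Set.Finite.subset (hrr'.union hrr) ?_)]
    · apply finsum_congr
      intro i
      have hid := rank_identity X Tr hTr i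
      calc sg i * hr X Tr.obj₁ i + sg i * hr X Tr.obj₃ i
          = sg i * (hr X Tr.obj₁ i + hr X Tr.obj₃ i) := by ring
        _ = sg i * (hr X Tr.obj₂ i + rr X Tr (i-1) + rr X Tr i) := by rw [hid]
        _ = sg i * hr X Tr.obj₂ i + (sg i * rr X Tr (i-1) + sg i * rr X Tr i) := by ring
    · intro i hi
      rw [Function.mem_support] at hi
      by_contra hc
      simp only [Set.mem_union, Function.mem_support, not_or, not_not] at hc
      apply hi
      rw [hc.1, hc.2, add_zero]
  rw [cancel] at main
  omega

end Maps


section Biprod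

lemma finsum_finset_sum_comm {κ : Type*} (s : Finset κ) (f : κ → ℤ → ℤ)
    (h : ∀ k, (Function.support (f k)).Finite) :
    ∑ᶠ i : ℤ, ∑ k ∈ s, f k i = ∑ k ∈ s, ∑ᶠ i : ℤ, f k i := by
  classical
  induction s using Finset.induction_on with
  | empty => simp
  | @insert a s ha ih =>
    have hfin : (Function.support (fun i : ℤ => ∑ k ∈ s, f k i)).Finite := by
      apply Set.Finite.subset (Set.Finite.biUnion s.finite_toSet (fun k _ => h k))
      intro i hi
      rw [Function.mem_support] at hi
      by_contra hc
      simp only [Set.mem_iUnion, Function.mem_support, not_exists, not_not] at hc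
      exact hi (Finset.sum_eq_zero (fun k hks => hc k hks))
    calc ∑ᶠ i : ℤ, ∑ k ∈ insert a s, f k i
        = ∑ᶠ i : ℤ, (f a i + ∑ k ∈ s, f k i) :=
          finsum_congr fun i => Finset.sum_insert ha
      _ = (∑ᶠ i : ℤ, f a i) + ∑ᶠ i : ℤ, ∑ k ∈ s, f k i := finsum_add_distrib (h a) hfin
      _ = ∑ k ∈ insert a s, ∑ᶠ i : ℤ, f k i := by rw [ih, Finset.sum_insert ha]

noncomputable def homBiproductEquiv (X : T) {κ : Type*} [Fintype κ] (Z : κ → T)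
    [HasBiproduct Z] : (X ⟶ ⨁ Z) ≃ₗ[ℂ] Π p, (X ⟶ Z p) where
  toFun f p := f ≫ biproduct.π Z p
  map_add' f g := by funext p; dsimp; rw [Preadditive.add_comp]
  map_smul' r f := by funext p; dsimp; rw [Linear.smul_comp]
  invFun g := biproduct.lift g
  left_inv f := by apply biproduct.hom_ext; intro p; simp
  right_inv g := by funext p; simp

lemma hr_biproduct [HomFiniteBounded T] (X : T) {κ : Type} [Fintype κ] (Y : κ → T)
    [HasBiproduct Y] (i : ℤ) :
    hr X (⨁ Y) i = ∑ p, hr X (Y p) i := by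
  unfold hr
  haveI : PreservesBiproduct Y (shiftFunctor T i) :=
    PreservesFiniteBiproducts.preserves.preserves
  have e1 : (shiftFunctor T i).obj (⨁ Y) ≅ ⨁ ((shiftFunctor T i).obj ∘ Y) :=
    Functor.mapBiproduct _ Y
  rw [hom_finrank_congr (Iso.refl X) e1,
    LinearEquiv.finrank_eq (homBiproductEquiv X ((shiftFunctor T i).obj ∘ Y)),
    Module.finrank_pi_fintype]
  push_cast
  rfl

lemma eu_biproduct [HomFiniteBounded T] (X : T) {κ : Type} [Fintype κ] (Y : κ → T)
    [HasBiproduct Y] :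
    eu X (⨁ Y) = ∑ p, eu X (Y p) := by
  calc eu X (⨁ Y) = ∑ᶠ i : ℤ, ∑ p, sg i * hr X (Y p) i := by
        unfold eu
        exact finsum_congr fun i => by rw [hr_biproduct, Finset.mul_sum]
    _ = ∑ p, ∑ᶠ i : ℤ, sg i * hr X (Y p) i :=
        finsum_finset_sum_comm _ _ (fun p => support_sg_hr_finite X (Y p))
    _ = ∑ p, eu X (Y p) := rfl

end Biprod


section Serre

variable [HomFiniteBounded T] (d : ℤ) [CalabiYau T d]

lemma serre_rank (A B : T) : finrank ℂ (A ⟶ B) = finrank ℂ (B ⟶ A⟦d⟧) := by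
  let m1 : (A ⟶ B) →ₗ[ℂ] Module.Dual ℂ (B ⟶ A⟦d⟧) :=
    { toFun := fun f => (CalabiYau.tr (d := d) A).comp (Linear.leftComp ℂ (A⟦d⟧) f)
      map_add' := fun f f' => by
        ext g
        simp [Linear.leftComp_apply, Preadditive.add_comp]
      map_smul' := fun c f => by
        ext g
        simp [Linear.leftComp_apply, Linear.smul_comp] }
  let m2 : (B ⟶ A⟦d⟧) →ₗ[ℂ] Module.Dual ℂ (A ⟶ B) :=
    { toFun := fun g => (CalabiYau.tr (d := d) A).comp (Linear.rightComp ℂ A g)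
      map_add' := fun g g' => by
        ext f
        simp [Linear.rightComp_apply, Preadditive.comp_add]
      map_smul' := fun c g => by
        ext f
        simp [Linear.rightComp_apply, Linear.comp_smul] }
  have i1 : Function.Injective m1 := by
    rw [injective_iff_map_eq_zero]
    intro f hf
    apply CalabiYau.nondegen_left (d := d) A B f
    intro g
    have := congrArg (fun φ => φ g) hf
    simpa [m1, Linear.leftComp_apply] using this
  have i2 : Function.Injective m2 := by
    rw [injective_iff_map_eq_zero]
    intro g hg
    apply CalabiYau.nondegen_right (d := d) A B g
    intro f
    have := congrArg (fun φ => φ f) hg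
    simpa [m2, Linear.rightComp_apply] using this
  have le1 := LinearMap.finrank_le_finrank_of_injective i1
  have le2 := LinearMap.finrank_le_finrank_of_injective i2
  rw [Subspace.dual_finrank_eq] at le1 le2
  omega

end Serre


section ShiftRank

lemma shift_map_end_surjective (A : T) (n : ℤ) :
    Function.Surjective (fun f : A ⟶ A => (shiftFunctor T n).map f) := by
  intro x
  set θ := shiftFunctorCompIsoId T n (-n) (add_neg_cancel n) with hθ
  refine ⟨θ.inv.app A ≫ ((shiftFunctor T (-n)).map x) ≫ θ.hom.app A, ?_⟩
  apply (shiftFunctor T (-n)).map_injective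
  rw [← cancel_mono (θ.hom.app A)]
  have hnat := θ.hom.naturality (θ.inv.app A ≫ ((shiftFunctor T (-n)).map x) ≫ θ.hom.app A)
  simp only [Functor.comp_map, Functor.id_map, Functor.id_obj] at hnat ⊢
  rw [hnat]
  slice_lhs 1 2 => rw [Iso.hom_inv_id_app]
  simp

lemma id_ne_zero_of_finrank_one {A : T} [HomFiniteBounded T]
    (hA : finrank ℂ (A ⟶ A) = 1) : (𝟙 A : A ⟶ A) ≠ 0 := by
  intro h
  have : ∀ f : A ⟶ A, f = 0 := fun f => by
    calc f = 𝟙 A ≫ f := (Category.id_comp f).symm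
    _ = 0 ≫ f := by rw [h]
    _ = 0 := zero_comp
  have : Subsingleton (A ⟶ A) := ⟨fun a b => (this a).trans (this b).symm⟩
  rw [finrank_zero_of_subsingleton] at hA
  omega

lemma end_one_shift [HomFiniteBounded T] (A : T) (hA : finrank ℂ (A ⟶ A) = 1) (n : ℤ) :
    finrank ℂ (A⟦n⟧ ⟶ A⟦n⟧) = 1 := by
  have hid : (𝟙 A : A ⟶ A) ≠ 0 := id_ne_zero_of_finrank_one hA
  have hall : ∀ f : A ⟶ A, ∃ c : ℂ, c • 𝟙 A = f :=
    fun f => (finrank_eq_one_iff_of_nonzero' (𝟙 A) hid).mp hA f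
  have hid' : (𝟙 (A⟦n⟧) : A⟦n⟧ ⟶ A⟦n⟧) ≠ 0 := by
    intro h
    apply hid
    apply (shiftFunctor T n).map_injective
    rw [CategoryTheory.Functor.map_id, Functor.map_zero, h]
  haveI : Nontrivial (A⟦n⟧ ⟶ A⟦n⟧) := ⟨⟨𝟙 _, 0, hid'⟩⟩
  have hinv : ∀ x : A⟦n⟧ ⟶ A⟦n⟧, x ≠ 0 → IsIso x := by
    intro x hx
    obtain ⟨f, hf⟩ := shift_map_end_surjective A n x
    obtain ⟨c, hc⟩ := hall f
    have hc0 : c ≠ 0 := by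
      rintro rfl
      apply hx
      rw [← hf, ← hc]
      simp
    have : IsIso f := by
      refine ⟨c⁻¹ • 𝟙 A, ?_, ?_⟩
      · rw [← hc]; rw [Linear.smul_comp, Linear.comp_smul, smul_smul,
          mul_inv_cancel₀ hc0, Category.comp_id, one_smul]
      · rw [← hc]; rw [Linear.smul_comp, Linear.comp_smul, smul_smul,
          inv_mul_cancel₀ hc0, Category.id_comp, one_smul]
    rw [← hf]
    infer_instance
  have hall' : ∀ x : A⟦n⟧ ⟶ A⟦n⟧, ∃ c : ℂ, c • 𝟙 (A⟦n⟧) = x := by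
    intro x
    let μ : Module.End ℂ (A⟦n⟧ ⟶ A⟦n⟧) := Linear.rightComp ℂ (A⟦n⟧) x
    obtain ⟨c, hc⟩ := Module.End.exists_eigenvalue μ
    obtain ⟨y, hy⟩ := hc.exists_hasEigenvector
    have hy0 : y ≠ 0 := hy.2
    have heq : y ≫ (x - c • 𝟙 (A⟦n⟧)) = 0 := by
      have := hy.apply_eq_smul
      simp only [μ, Linear.rightComp_apply] at this
      rw [Preadditive.comp_sub, this, Linear.comp_smul, Category.comp_id, sub_self]
    refine ⟨c, ?_⟩
    by_contra hne
    have hsub : x - c • 𝟙 (A⟦n⟧) ≠ 0 := fun h => hne (sub_eq_zero.mp h).symm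
    haveI := hinv _ hsub
    apply hy0
    calc y = (y ≫ (x - c • 𝟙 (A⟦n⟧))) ≫ inv (x - c • 𝟙 (A⟦n⟧)) := by
          rw [Category.assoc, IsIso.hom_inv_id, Category.comp_id]
    _ = 0 := by rw [heq, zero_comp]
  exact (finrank_eq_one_iff_of_nonzero' (𝟙 (A⟦n⟧)) hid').mpr hall'

lemma rank_shift [HomFiniteBounded T] (A : T) (hA : finrank ℂ (A ⟶ A) = 1) (n : ℤ) (Y : T) :
    finrank ℂ (A⟦n⟧ ⟶ Y⟦n⟧) = finrank ℂ (A ⟶ Y) := by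
  have hid : (𝟙 A : A ⟶ A) ≠ 0 := id_ne_zero_of_finrank_one hA
  have hall : ∀ f : A ⟶ A, ∃ c : ℂ, c • 𝟙 A = f :=
    fun f => (finrank_eq_one_iff_of_nonzero' (𝟙 A) hid).mp hA f
  have hend := end_one_shift A hA n
  have hid' : (𝟙 (A⟦n⟧) : A⟦n⟧ ⟶ A⟦n⟧) ≠ 0 := id_ne_zero_of_finrank_one hend
  have hall' : ∀ x : A⟦n⟧ ⟶ A⟦n⟧, ∃ c : ℂ, c • 𝟙 (A⟦n⟧) = x :=
    fun x => (finrank_eq_one_iff_of_nonzero' (𝟙 (A⟦n⟧)) hid').mp hend x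
  set k := finrank ℂ (A ⟶ Y) with hk
  let b : Basis (Fin k) ℂ (A ⟶ Y) := Module.finBasis ℂ (A ⟶ Y)
  let v : Fin k → (A⟦n⟧ ⟶ Y⟦n⟧) := fun p => (shiftFunctor T n).map (b p)
  -- linear independence
  have hli : LinearIndependent ℂ v := by
    rw [Fintype.linearIndependent_iff]
    intro g hg
    -- rewrite each g p • v p as (shiftFunctor n).map (e p ≫ b p)
    have hrep : ∀ p : Fin k, ∃ cp : ℂ, (shiftFunctor T n).map ((cp • 𝟙 A) ≫ b p) = g p • v p := by
      intro p
      obtain ⟨f, hf⟩ := shift_map_end_surjective A n (g p • 𝟙 (A⟦n⟧))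
      obtain ⟨cp, hcp⟩ := hall f
      have hf' : (shiftFunctor T n).map f = g p • 𝟙 ((shiftFunctor T n).obj A) := hf
      refine ⟨cp, ?_⟩
      rw [Functor.map_comp, hcp, hf']
      rw [Linear.smul_comp, Category.id_comp]
    choose cp hcp using hrep
    have hsum : (shiftFunctor T n).map (∑ p, (cp p • 𝟙 A) ≫ b p) = 0 := by
      rw [Functor.map_sum]
      rw [Finset.sum_congr rfl (fun p _ => hcp p)]
      exact hg
    rw [← Functor.map_zero (shiftFunctor T n) A Y] at hsum
    have hsum' := (shiftFunctor T n).map_injective hsum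
    have hc0 : ∀ p, cp p = 0 := by
      have hb := Fintype.linearIndependent_iff.mp b.linearIndependent cp
      apply hb
      rw [← hsum']
      apply Finset.sum_congr rfl
      intro p _
      rw [Linear.smul_comp, Category.id_comp]
    intro p
    have := hcp p
    rw [hc0 p, zero_smul, zero_comp, Functor.map_zero] at this
    have h0 := this.symm
    rw [smul_eq_zero] at h0
    rcases h0 with h | h
    · exact h
    · exfalso
      apply b.ne_zero p
      apply (shiftFunctor T n).map_injective
      rw [Functor.map_zero]
      exact h
  -- spanning
  have hsp : ⊤ ≤ Submodule.span ℂ (Set.range v) := by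
    rintro x -
    obtain ⟨f, hf⟩ := (shiftFunctor T n).map_surjective x
    have hf' : f = ∑ p, b.repr f p • b p := (b.sum_repr f).symm
    have : x = ∑ p, (shiftFunctor T n).map (b.repr f p • b p) := by
      rw [← Functor.map_sum, ← hf', hf]
    rw [this]
    apply Submodule.sum_mem
    intro p _
    have : (b.repr f p • b p) = (b.repr f p • 𝟙 A) ≫ b p := by
      rw [Linear.smul_comp, Category.id_comp]
    rw [this, Functor.map_comp]
    obtain ⟨dp, hdp⟩ := hall' ((shiftFunctor T n).map (b.repr f p • 𝟙 A))
    rw [← hdp, Linear.smul_comp, Category.id_comp]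
    exact Submodule.smul_mem _ _ (Submodule.subset_span ⟨p, rfl⟩)
  let B' : Basis (Fin k) ℂ (A⟦n⟧ ⟶ Y⟦n⟧) := Basis.mk hli hsp
  rw [finrank_eq_card_basis B', Fintype.card_fin]

end ShiftRank


section Count

variable [HomFiniteBounded T] {E : T}

lemma hr_count (tE : SphericalTwist E) (G : T) (n : ℤ) :
    hr E G n = ((Finset.univ.filter (fun p : Fin (tE.m G) => tE.deg G p = n)).card : ℤ) := by
  unfold hr
  rw [finrank_eq_card_basis (tE.bas G n), Fintype.card_subtype]

lemma sum_sg_deg (tE : SphericalTwist E) (G : T) :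
    ∑ p : Fin (tE.m G), sg (tE.deg G p) = eu E G := by
  classical
  rw [Finset.sum_comp (fun n => sg n) (tE.deg G)]
  unfold eu
  rw [finsum_eq_finset_sum_of_support_subset _ (s := Finset.univ.image (tE.deg G)) ?hs]
  · apply Finset.sum_congr rfl
    intro n hn
    rw [hr_count tE G n, nsmul_eq_mul]
    ring
  case hs =>
    intro n hn
    rw [Function.mem_support] at hn
    by_contra hc
    apply hn
    have hemp : (Finset.univ.filter (fun p : Fin (tE.m G) => tE.deg G p = n)) = ∅ := by
      rw [Finset.filter_eq_empty_iff]
      intro p _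
      exact fun h => hc (Finset.mem_coe.mpr (Finset.mem_image.mpr ⟨p, Finset.mem_univ p, h⟩))
    rw [hr_count tE G n, hemp]
    simp

end Count

section Flip

variable [HomFiniteBounded T] (d : ℤ) [CalabiYau T d]

lemma end_rank_one_of_spherical {E : T} (hE1 : finrank ℂ (E ⟶ E⟦(0:ℤ)⟧) = 1) :
    finrank ℂ (E ⟶ E) = 1 := by
  have h := hom_finrank_congr (Iso.refl E) ((shiftFunctorZero T ℤ).app E)
  exact h.symm.trans hE1

lemma hr_serre_flip {E : T} (hE1 : finrank ℂ (E ⟶ E⟦(0:ℤ)⟧) = 1) (G : T) (j : ℤ) :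
    hr G E j = hr E G (d - j) := by
  have hE0 : finrank ℂ (E ⟶ E) = 1 := end_rank_one_of_spherical hE1
  unfold hr
  have s1 : finrank ℂ (G ⟶ E⟦j⟧)
      = finrank ℂ (G ⟶ ((shiftFunctor T d).obj (E⟦j-d⟧))) :=
    hom_finrank_congr (Iso.refl G) ((shiftFunctorAdd' T (j-d) d j (by ring)).app E)
  have s2 := (serre_rank d (E⟦j-d⟧) G).symm
  have hA' : finrank ℂ (E⟦j-d⟧ ⟶ E⟦j-d⟧) = 1 := end_one_shift E hE0 (j-d)
  have s3 := (rank_shift (E⟦j-d⟧) hA' (d-j) G).symm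
  have s4 : finrank ℂ ((E⟦j-d⟧)⟦d-j⟧ ⟶ G⟦d-j⟧) = finrank ℂ (E ⟶ G⟦d-j⟧) := by
    apply hom_finrank_congr _ (Iso.refl (G⟦d-j⟧))
    exact ((shiftFunctorAdd' T (j-d) (d-j) 0 (by ring)).app E).symm
      ≪≫ (shiftFunctorZero T ℤ).app E
  rw [s1, s2, s3, s4]

lemma eu_serre_flip {E : T} (hE1 : finrank ℂ (E ⟶ E⟦(0:ℤ)⟧) = 1) (G : T) :
    eu G E = sg d * eu E G := by
  unfold eu
  calc ∑ᶠ j : ℤ, sg j * hr G E j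
      = ∑ᶠ j : ℤ, sg j * hr E G (d - j) :=
        finsum_congr fun j => by rw [hr_serre_flip d hE1 G j]
    _ = ∑ᶠ i : ℤ, sg d * (sg i * hr E G i) := by
        rw [← finsum_comp_equiv (Equiv.subLeft d) (f := fun j => sg j * hr E G (d - j))]
        apply finsum_congr
        intro i
        simp only [Equiv.subLeft_apply, sub_sub_cancel]
        rw [sg_sub]
        ring
    _ = sg d * ∑ᶠ i : ℤ, sg i * hr E G i :=
        (mul_finsum _ _).symm

end Flip


/-- Let `X` be a smooth complex projective Calabi-Yau variety of
dimension `d ≥ 2`, `E` a spherical object of `D(X)` and `G` an object with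
`Φ_E(G) ≅ G⟦-d⟧`.  Then `d_E(G) = Σᵢ dim Hom(E, G[i])` is even; in particular
`d_E(G) ≠ 1`. -/
theorem dHom_even_of_twist_shift
    [HomFiniteBounded T] (d : ℕ) (hd : 2 ≤ d) [CalabiYau T (d : ℤ)]
    {E : T} (hE : IsSpherical (d : ℤ) E) (tE : SphericalTwist E) (G : T)
    (hG : Nonempty (tE.Φ.obj G ≅ G⟦-(d : ℤ)⟧)) :
    Even (dHom E G) ∧ dHom E G ≠ 1 := by
  classical
  obtain ⟨ψ⟩ := hG
  set χ : ℤ := eu E G with hχdef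
  have htri := eu_triangle G (Triangle.mk (tE.α.app G) (tE.ε.app G) (tE.δ.app G)) (tE.dist G)
  simp only [Triangle.mk_obj₁, Triangle.mk_obj₂, Triangle.mk_obj₃] at htri
  have h2 : eu G (tE.Φ.obj G) = sg (d:ℤ) * eu G G := by
    rw [eu_congr_right ψ G, eu_shift, sg_neg]
  have h3 : eu G (tE.Ψ.obj G) = χ * eu G E := by
    rw [eu_congr_right (tE.decomp G) G, eu_biproduct]
    have hstep : ∀ p : Fin (tE.m G),
        eu G (E⟦-(tE.deg G p)⟧) = sg (tE.deg G p) * eu G E := by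
      intro p
      rw [eu_shift, sg_neg]
    rw [Finset.sum_congr rfl (fun p _ => hstep p), ← Finset.sum_mul, sum_sg_deg tE G]
  have h4 : eu G E = sg (d:ℤ) * χ := eu_serre_flip (d:ℤ) hE.1 G
  have master : χ * (sg (d:ℤ) * χ) = sg (d:ℤ) * eu G G + eu G G := by
    calc χ * (sg (d:ℤ) * χ) = χ * eu G E := by rw [h4]
      _ = eu G (tE.Ψ.obj G) := h3.symm
      _ = eu G (tE.Φ.obj G) + eu G G := htri
      _ = sg (d:ℤ) * eu G G + eu G G := by rw [h2]
  have hχeven : Even χ := by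
    rcases Nat.even_or_odd d with hpar | hpar
    · have hsg : sg (d:ℤ) = 1 := sg_even (by exact_mod_cast hpar)
      rw [hsg] at master
      have hmm : χ * χ = 2 * eu G G := by linarith [master]
      have : Even (χ * χ) := ⟨eu G G, by linarith⟩
      rcases Int.even_mul.mp this with h | h <;> exact h
    · have hsg : sg (d:ℤ) = -1 := sg_odd (by exact_mod_cast hpar)
      rw [hsg] at master
      have hmm : χ * χ = 0 := by linarith [master]
      have h0 : χ = 0 := mul_self_eq_zero.mp hmm
      rw [h0]
      exact Even.zero
  -- transfer parity to dHom
  set s : Finset ℤ := (support_hr_finite E G).toFinset with hsdef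
  have hsub0 : Function.support (fun i : ℤ => finrank ℂ (E ⟶ G⟦i⟧)) ⊆ ↑s := by
    intro i hi
    rw [Function.mem_support] at hi
    rw [hsdef, Set.Finite.coe_toFinset, Function.mem_support]
    unfold hr
    exact_mod_cast hi
  have hd1 : dHom E G = ∑ i ∈ s, finrank ℂ (E ⟶ G⟦i⟧) :=
    finsum_eq_finset_sum_of_support_subset _ hsub0
  have hsub1 : Function.support (fun i => sg i * hr E G i) ⊆ ↑s := by
    rw [hsdef, Set.Finite.coe_toFinset]
    exact support_sg_hr E G
  have hχ1 : χ = ∑ i ∈ s, sg i * hr E G i :=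
    finsum_eq_finset_sum_of_support_subset _ hsub1
  have hcast : (dHom E G : ℤ) = ∑ i ∈ s, hr E G i := by
    rw [hd1]
    push_cast
    rfl
  have hdiff : Even ((dHom E G : ℤ) - χ) := by
    rw [hcast, hχ1, ← Finset.sum_sub_distrib]
    rw [even_iff_two_dvd]
    apply Finset.dvd_sum
    intro i _
    rcases sg_eq_one_or i with h | h
    · rw [h, one_mul, sub_self]
      exact dvd_zero 2
    · rw [h]
      have : hr E G i - -1 * hr E G i = 2 * hr E G i := by ring
      rw [this]
      exact Dvd.intro _ rfl
  have : Even ((dHom E G : ℤ)) := by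
    have := hχeven.add hdiff
    rwa [add_sub_cancel] at this
  have heven : Even (dHom E G) := by exact_mod_cast this
  exact ⟨heven, fun h1 => by rw [h1] at heven; exact (Nat.not_even_one) heven⟩


end SphericalPaper
end

section
/- Let X be a smooth complex projective Calabi-Yau variety of dimension d ≥ 2 and let E and F be spherical objects of D(X) whose spherical twists commute, Φ_E ∘ Φ_F ≅ Φ_F ∘ Φ_E. Then for any object G of D(X), G lies in ⟨E⟩ if and only if Φ_F(G) lies in ⟨E⟩. -/
/-!
This file formalizes a statement from "Commuting reflection functors and
orthogonal spherical objects".  Mathlib does not have bounded derived categories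
of coherent sheaves on smooth projective varieties, so the geometric setting is
axiomatized: `T` plays the role of the bounded derived category `D(X)` of a
smooth complex projective variety `X` — a ℂ-linear triangulated category with
finite-dimensional, bounded graded Hom's — and the Calabi-Yau condition is
expressed by Serre duality in the form of a perfect trace pairing
`Hom(A,B) × Hom(B,A⟦d⟧) → ℂ`.
-/

open CategoryTheory Limits Pretriangulated Module

universe v u

namespace SphericalPaper

variable (T : Type u) [Category.{v} T] [Preadditive T] [Linear ℂ T]
  [HasZeroObject T] [HasShift T ℤ] [∀ n : ℤ, (shiftFunctor T n).Additive]
  [Pretriangulated T] [HasFiniteBiproducts T]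

variable {T}

/-- Membership in `⟨E⟩`, the smallest strictly full triangulated subcategory of
`T` containing `E`: the closure of `{E}` under isomorphisms, shifts and
extensions (cones) in distinguished triangles. -/
inductive Generates (E : T) : T → Prop
  | self : Generates E E
  | of_iso {G G' : T} : (G ≅ G') → Generates E G → Generates E G'
  | shift (G : T) (n : ℤ) : Generates E G → Generates E (G⟦n⟧)
  | ext (Tr : Triangle T) : (Tr ∈ distTriang T) → Generates E Tr.obj₁ →
      Generates E Tr.obj₃ → Generates E Tr.obj₂

set_option linter.unusedSectionVars false

lemma id_ne_zero_of_finrank_one_s7 {X : T} (h : finrank ℂ (X ⟶ X) = 1) :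
    (𝟙 X : X ⟶ X) ≠ 0 := by
  intro h0
  have hz : ∀ f : X ⟶ X, f = 0 := fun f => by
    rw [← Category.comp_id f, h0, comp_zero]
  haveI : Subsingleton (X ⟶ X) := ⟨fun a b => by rw [hz a, hz b]⟩
  rw [Module.finrank_zero_of_subsingleton] at h
  exact one_ne_zero h.symm

lemma exists_smul_id_of_finrank_one {X : T} (h : finrank ℂ (X ⟶ X) = 1) (f : X ⟶ X) :
    ∃ c : ℂ, f = c • 𝟙 X := by
  obtain ⟨c, hc⟩ := (finrank_eq_one_iff_of_nonzero' (𝟙 X) (id_ne_zero_of_finrank_one_s7 h)).mp h f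
  exact ⟨c, hc.symm⟩

lemma finrank_end_eq_one {d : ℤ} {E : T} (hE : IsSpherical d E) :
    finrank ℂ (E ⟶ E) = 1 := by
  let i : ((E⟦(0:ℤ)⟧ : T) ≅ E) := (shiftFunctorZero T ℤ).app E
  let e : (E ⟶ E) ≃ₗ[ℂ] (E ⟶ E⟦(0:ℤ)⟧) :=
    { toFun := fun f => f ≫ i.inv
      map_add' := fun f g => by simp [Preadditive.add_comp]
      map_smul' := fun c f => by simp
      invFun := fun g => g ≫ i.hom
      left_inv := fun f => by simp
      right_inv := fun g => by simp }
  rw [e.finrank_eq]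
  exact hE.1

lemma exists_smul_id' [HomFiniteBounded T] {X : T}
    (h1 : (𝟙 X : X ⟶ X) ≠ 0) (h2 : ∀ f : X ⟶ X, f ≠ 0 → IsIso f) (f : X ⟶ X) :
    ∃ c : ℂ, f = c • 𝟙 X := by
  haveI := HomFiniteBounded.finite (T := T) X X
  have hfr : finrank ℂ (X ⟶ X) = 1 := by
    refine finrank_endomorphism_eq_one ℂ (fun g => ⟨fun hg hg0 => ?_, h2 g⟩)
    subst hg0
    exact h1 (by haveI := hg; rw [← IsIso.hom_inv_id (0 : X ⟶ X), zero_comp])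
  exact exists_smul_id_of_finrank_one hfr f

lemma spherical_isIso {d : ℤ} {E : T} (hE : IsSpherical d E) :
    ∀ f : E ⟶ E, f ≠ 0 → IsIso f := by
  intro f hf
  obtain ⟨c, rfl⟩ := exists_smul_id_of_finrank_one (finrank_end_eq_one hE) f
  have hc : c ≠ 0 := by rintro rfl; simp at hf
  exact ⟨⟨c⁻¹ • 𝟙 E, by simp [smul_smul, mul_inv_cancel₀ hc, inv_mul_cancel₀ hc],
    by simp [smul_smul, mul_inv_cancel₀ hc, inv_mul_cancel₀ hc]⟩⟩

lemma id_ne_zero_map (F : T ⥤ T) [F.Faithful] [F.PreservesZeroMorphisms] {X : T}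
    (h : (𝟙 X : X ⟶ X) ≠ 0) : (𝟙 (F.obj X) : F.obj X ⟶ F.obj X) ≠ 0 := by
  intro h0
  exact h (F.map_injective (by rw [F.map_id, h0, F.map_zero]))

lemma isIso_map_of_ne_zero (F : T ⥤ T) [F.Full] [F.Faithful] [F.PreservesZeroMorphisms] {X : T}
    (hX : ∀ f : X ⟶ X, f ≠ 0 → IsIso f) :
    ∀ g : F.obj X ⟶ F.obj X, g ≠ 0 → IsIso g := by
  intro g hg
  obtain ⟨f, rfl⟩ := F.map_surjective g
  haveI : IsIso f := hX f (fun h => hg (by rw [h, F.map_zero]))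
  infer_instance

lemma hom_shift_shift_zero {d : ℤ} {E : T} (hE : IsSpherical d E) {a b : ℤ}
    (h1 : a + b ≠ 0) (h2 : a + b ≠ d) (f : E ⟶ ((E⟦a⟧)⟦b⟧ : T)) : f = 0 := by
  have h := hE.2.2 (a + b) h1 h2 (f ≫ ((shiftFunctorAdd' T a b (a + b) rfl).app E).inv)
  calc f = (f ≫ ((shiftFunctorAdd' T a b (a + b) rfl).app E).inv) ≫
        ((shiftFunctorAdd' T a b (a + b) rfl).app E).hom := by
        rw [Category.assoc, Iso.inv_hom_id, Category.comp_id]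
    _ = 0 := by rw [h, zero_comp]

lemma deg_self_mem {d : ℤ} {E : T} (hE : IsSpherical d E) (t : SphericalTwist E)
    (p : Fin (t.m E)) : t.deg E p = 0 ∨ t.deg E p = d := by
  by_contra hcon
  push_neg at hcon
  exact (t.bas E (t.deg E p)).ne_zero ⟨p, rfl⟩ (hE.2.2 _ hcon.1 hcon.2 _)

lemma hom_to_psi_shift_zero {d : ℤ} (hd : 2 ≤ d) {E : T} (hE : IsSpherical d E)
    (t : SphericalTwist E) (φ : E ⟶ ((t.Ψ.obj E)⟦(1:ℤ)⟧ : T)) : φ = 0 := by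
  have hadd : (-1 : ℤ) + 1 = 0 := by omega
  set adj := (shiftEquiv' T (-1 : ℤ) (1 : ℤ) hadd).toAdjunction with hadj
  have hgz : (adj.homEquiv E (t.Ψ.obj E)).symm φ = 0 := by
    set g := (adj.homEquiv E (t.Ψ.obj E)).symm φ with hg
    have hcomp : g ≫ (t.decomp E).hom = 0 := by
      apply biproduct.hom_ext
      intro p
      rw [zero_comp, Category.assoc]
      set h' := g ≫ ((t.decomp E).hom ≫ biproduct.π _ p) with hh'
      rw [← Category.assoc] at hh'
      have hto : (adj.homEquiv E (E⟦-(t.deg E p)⟧)) h' = 0 := by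
        apply hom_shift_shift_zero hE (a := -(t.deg E p)) (b := 1)
        · rcases deg_self_mem hE t p with h | h <;> omega
        · rcases deg_self_mem hE t p with h | h <;> omega
      have := congrArg (adj.homEquiv E (E⟦-(t.deg E p)⟧)).symm hto
      rw [Equiv.symm_apply_apply, Adjunction.homEquiv_counit] at this
      rw [this]
      simp
    have h2 : g = (g ≫ (t.decomp E).hom) ≫ (t.decomp E).inv := by
      rw [Category.assoc, Iso.hom_inv_id, Category.comp_id]
    rw [h2, hcomp, zero_comp]
  have h3 := ((adj.homEquiv E (t.Ψ.obj E)).apply_symm_apply φ).symm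
  rw [hgz, Adjunction.homEquiv_unit] at h3
  simp at h3; exact h3

lemma exists_section_eval {d : ℤ} {E : T} (hE : IsSpherical d E) (t : SphericalTwist E) :
    ∃ σ : E ⟶ t.Ψ.obj E, σ ≫ t.ε.app E = 𝟙 E := by
  have hcard : Fintype.card {p : Fin (t.m E) // t.deg E p = 0} = 1 := by
    rw [← Module.finrank_eq_card_basis (t.bas E 0)]
    exact hE.1
  obtain ⟨⟨p₀, hp₀⟩⟩ := Fintype.card_pos_iff.mp (by omega : 0 < Fintype.card {p : Fin (t.m E) // t.deg E p = 0})
  have heq : ((E⟦(0:ℤ)⟧ : T) = E⟦-(t.deg E p₀)⟧) := by rw [hp₀, neg_zero]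
  set w : E ⟶ (E⟦-(t.deg E p₀)⟧ : T) := ((shiftFunctorZero T ℤ).app E).inv ≫ eqToHom heq with hw
  haveI : IsIso w := by rw [hw]; infer_instance
  set σ₀ : E ⟶ t.Ψ.obj E :=
    w ≫ biproduct.ι (fun q : Fin (t.m E) => (E⟦-(t.deg E q)⟧ : T)) p₀ ≫ (t.decomp E).inv with hσ₀
  have hm : ((shiftEquiv' T (-(t.deg E p₀)) (t.deg E p₀) (neg_add_cancel _)).toAdjunction.homEquiv
      E E).symm (t.bas E (t.deg E p₀) ⟨p₀, rfl⟩) ≠ 0 := by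
    intro h0
    apply (t.bas E (t.deg E p₀)).ne_zero ⟨p₀, rfl⟩
    have h1 := (((shiftEquiv' T (-(t.deg E p₀)) (t.deg E p₀)
      (neg_add_cancel _)).toAdjunction.homEquiv E E).apply_symm_apply (t.bas E (t.deg E p₀) ⟨p₀, rfl⟩)).symm
    rw [h0, Adjunction.homEquiv_unit] at h1
    simp at h1; exact h1
  have hne : σ₀ ≫ t.ε.app E ≠ 0 := by
    intro h0
    apply hm
    have h1 : w ≫ (biproduct.ι (fun q : Fin (t.m E) => (E⟦-(t.deg E q)⟧ : T)) p₀ ≫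
        (t.decomp E).inv ≫ t.ε.app E) = 0 := by
      rw [hσ₀] at h0
      simpa [Category.assoc] using h0
    rw [t.eval E p₀] at h1
    exact (cancel_epi w).1 (h1.trans comp_zero.symm)
  obtain ⟨c, hc⟩ := exists_smul_id_of_finrank_one (finrank_end_eq_one hE) (σ₀ ≫ t.ε.app E)
  have hc0 : c ≠ 0 := by rintro rfl; rw [zero_smul] at hc; exact hne hc
  refine ⟨c⁻¹ • σ₀, ?_⟩
  rw [Linear.smul_comp, hc, smul_smul, inv_mul_cancel₀ hc0, one_smul]

lemma hom_to_phi_shift_zero {d : ℤ} (hd : 2 ≤ d) {E : T} (hE : IsSpherical d E)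
    (t : SphericalTwist E) (ψ : E ⟶ ((t.Φ.obj E)⟦(1:ℤ)⟧ : T)) : ψ = 0 := by
  obtain ⟨σ, hσ⟩ := exists_section_eval hE t
  have hT := t.dist E
  have h23 : t.ε.app E ≫ t.δ.app E = 0 := comp_distTriang_mor_zero₂₃ _ hT
  have hδ : t.δ.app E = 0 := by
    calc t.δ.app E = σ ≫ (t.ε.app E ≫ t.δ.app E) := by
          rw [← Category.assoc, hσ, Category.id_comp]
      _ = 0 := by rw [h23, comp_zero]
  have hrot := rot_of_distTriang _ hT
  have hψ3 : ψ ≫ (Triangle.mk (t.α.app E) (t.ε.app E) (t.δ.app E)).rotate.mor₃ = 0 := by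
    have hv : ψ ≫ (t.α.app E)⟦(1:ℤ)⟧' = 0 := hom_to_psi_shift_zero hd hE t _
    show ψ ≫ (-(t.α.app E)⟦(1:ℤ)⟧') = 0
    rw [Preadditive.comp_neg, hv, neg_zero]
  obtain ⟨χ, hχ⟩ := Triangle.coyoneda_exact₃ _ hrot ψ hψ3
  rw [hχ]
  show χ ≫ t.δ.app E = 0
  exact (congrArg (fun f => χ ≫ f) hδ).trans comp_zero

lemma twist_obj_E_iso_shift {d : ℤ} (hd : 2 ≤ d) [HomFiniteBounded T] {E F : T}
    (hE : IsSpherical d E) (tE : SphericalTwist E) (tF : SphericalTwist F)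
    (hcomm : Nonempty (tF.Φ ⋙ tE.Φ ≅ tE.Φ ⋙ tF.Φ)) :
    ∃ k : ℤ, Nonempty ((tF.Φ.obj E : T) ≅ E⟦k⟧) := by
  haveI := tF.equiv
  letI := tF.commShift
  haveI : tF.Φ.IsTriangulated := tF.triangulated
  obtain ⟨η⟩ := hcomm
  have hEfr := finrank_end_eq_one hE
  have hEid := id_ne_zero_of_finrank_one_s7 hEfr
  have hEiso := spherical_isIso hE
  have hAid : (𝟙 (tF.Φ.obj E) : tF.Φ.obj E ⟶ tF.Φ.obj E) ≠ 0 := id_ne_zero_map tF.Φ hEid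
  have hAiso := isIso_map_of_ne_zero tF.Φ hEiso
  have hAscalar : ∀ g2 : tF.Φ.obj E ⟶ tF.Φ.obj E, ∃ c : ℂ, g2 = c • 𝟙 (tF.Φ.obj E) :=
    exists_smul_id' hAid hAiso
  have hδA : tE.δ.app (tF.Φ.obj E) = 0 := by
    let I : (((tE.Φ.obj (tF.Φ.obj E))⟦(1:ℤ)⟧ : T) ≅ tF.Φ.obj ((tE.Φ.obj E)⟦(1:ℤ)⟧)) :=
      (shiftFunctor T (1:ℤ)).mapIso (η.app E) ≪≫
        ((tF.Φ.commShiftIso (1:ℤ)).app (tE.Φ.obj E)).symm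
    have hz : tF.Φ.preimage (tE.δ.app (tF.Φ.obj E) ≫ I.hom) = 0 :=
      hom_to_phi_shift_zero hd hE tE _
    have h1 : tE.δ.app (tF.Φ.obj E) ≫ I.hom = 0 := by
      rw [← tF.Φ.map_preimage (tE.δ.app (tF.Φ.obj E) ≫ I.hom), hz, tF.Φ.map_zero]
    calc tE.δ.app (tF.Φ.obj E) = (tE.δ.app (tF.Φ.obj E) ≫ I.hom) ≫ I.inv := by
          rw [Category.assoc, Iso.hom_inv_id, Category.comp_id]
      _ = 0 := by rw [h1, zero_comp]
  obtain ⟨σ, hσ⟩ : ∃ σ : tF.Φ.obj E ⟶ tE.Ψ.obj (tF.Φ.obj E),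
      𝟙 (tF.Φ.obj E) = σ ≫ tE.ε.app (tF.Φ.obj E) :=
    Triangle.coyoneda_exact₃ _ (tE.dist (tF.Φ.obj E)) (𝟙 (tF.Φ.obj E))
      (by show 𝟙 (tF.Φ.obj E) ≫ tE.δ.app (tF.Φ.obj E) = 0; rw [hδA, comp_zero])
  have hσ' : 𝟙 (tF.Φ.obj E) = σ ≫ tE.ε.app (tF.Φ.obj E) := hσ
  have hsum : 𝟙 (tF.Φ.obj E) = ∑ p : Fin (tE.m (tF.Φ.obj E)),
      (σ ≫ (tE.decomp (tF.Φ.obj E)).hom ≫ biproduct.π _ p) ≫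
        (biproduct.ι (fun q : Fin (tE.m (tF.Φ.obj E)) => (E⟦-(tE.deg (tF.Φ.obj E) q)⟧ : T)) p ≫
          (tE.decomp (tF.Φ.obj E)).inv ≫ tE.ε.app (tF.Φ.obj E)) := by
    have h0 : σ ≫ tE.ε.app (tF.Φ.obj E) =
        σ ≫ (tE.decomp (tF.Φ.obj E)).hom ≫
          (∑ j : Fin (tE.m (tF.Φ.obj E)),
            biproduct.π (fun q : Fin (tE.m (tF.Φ.obj E)) => (E⟦-(tE.deg (tF.Φ.obj E) q)⟧ : T)) j ≫
            biproduct.ι (fun q : Fin (tE.m (tF.Φ.obj E)) => (E⟦-(tE.deg (tF.Φ.obj E) q)⟧ : T)) j) ≫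
          (tE.decomp (tF.Φ.obj E)).inv ≫ tE.ε.app (tF.Φ.obj E) := by
      rw [biproduct.total, Category.id_comp]
      exact congrArg (fun f => σ ≫ f) ((tE.decomp (tF.Φ.obj E)).hom_inv_id_assoc _).symm
    rw [hσ', h0]
    simp only [Preadditive.sum_comp, Preadditive.comp_sum, Category.assoc]
  choose c hc using fun p : Fin (tE.m (tF.Φ.obj E)) => hAscalar
    ((σ ≫ (tE.decomp (tF.Φ.obj E)).hom ≫ biproduct.π _ p) ≫
      (biproduct.ι (fun q : Fin (tE.m (tF.Φ.obj E)) => (E⟦-(tE.deg (tF.Φ.obj E) q)⟧ : T)) p ≫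
        (tE.decomp (tF.Φ.obj E)).inv ≫ tE.ε.app (tF.Φ.obj E)))
  have hsumc : ∑ p : Fin (tE.m (tF.Φ.obj E)), c p = 1 := by
    have h1 : (∑ p : Fin (tE.m (tF.Φ.obj E)), c p) • (𝟙 (tF.Φ.obj E)) = (1:ℂ) • 𝟙 (tF.Φ.obj E) := by
      rw [one_smul, Finset.sum_smul]
      conv_rhs => rw [hsum]
      exact Finset.sum_congr rfl (fun p _ => (hc p).symm)
    have h2 : ((∑ p : Fin (tE.m (tF.Φ.obj E)), c p) - 1) • (𝟙 (tF.Φ.obj E)) = 0 := by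
      rw [sub_smul, h1, sub_self]
    rcases smul_eq_zero.mp h2 with h3 | h3
    · exact sub_eq_zero.mp h3
    · exact absurd h3 hAid
  have hex : ∃ p : Fin (tE.m (tF.Φ.obj E)), c p ≠ 0 := by
    by_contra hno
    push_neg at hno
    rw [Finset.sum_eq_zero (fun p _ => hno p)] at hsumc
    exact one_ne_zero hsumc.symm
  obtain ⟨p, hp⟩ := hex
  set s : tF.Φ.obj E ⟶ (E⟦-(tE.deg (tF.Φ.obj E) p)⟧ : T) :=
    σ ≫ (tE.decomp (tF.Φ.obj E)).hom ≫ biproduct.π _ p with hs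
  set r : (E⟦-(tE.deg (tF.Φ.obj E) p)⟧ : T) ⟶ tF.Φ.obj E :=
    biproduct.ι (fun q : Fin (tE.m (tF.Φ.obj E)) => (E⟦-(tE.deg (tF.Φ.obj E) q)⟧ : T)) p ≫
      (tE.decomp (tF.Φ.obj E)).inv ≫ tE.ε.app (tF.Φ.obj E) with hr
  have hcp : s ≫ r = c p • 𝟙 (tF.Φ.obj E) := hc p
  have hkid : (𝟙 ((E⟦-(tE.deg (tF.Φ.obj E) p)⟧ : T)) :
      (E⟦-(tE.deg (tF.Φ.obj E) p)⟧ : T) ⟶ _) ≠ 0 :=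
    id_ne_zero_map (shiftFunctor T (-(tE.deg (tF.Φ.obj E) p))) hEid
  have hkiso := isIso_map_of_ne_zero (shiftFunctor T (-(tE.deg (tF.Φ.obj E) p))) hEiso
  obtain ⟨c', hc'⟩ := exists_smul_id' hkid hkiso (r ≫ s)
  have hsne : s ≠ 0 := by
    intro h0
    apply hp
    have h1 : s ≫ r = 0 := by rw [h0, zero_comp]
    rw [hcp] at h1
    rcases smul_eq_zero.mp h1 with h | h
    · exact h
    · exact absurd h hAid
  have hcc : c' = c p := by
    have h1 : (s ≫ r) ≫ s = c' • s := by
      rw [Category.assoc, hc', Linear.comp_smul, Category.comp_id]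
    have h2 : (s ≫ r) ≫ s = (c p) • s := by
      rw [hcp, Linear.smul_comp, Category.id_comp]
    have h4 : (c' - c p) • s = 0 := by rw [sub_smul, ← h1, ← h2, sub_self]
    rcases smul_eq_zero.mp h4 with h | h
    · exact sub_eq_zero.mp h
    · exact absurd h hsne
  refine ⟨-(tE.deg (tF.Φ.obj E) p), ⟨⟨s, (c p)⁻¹ • r, ?_, ?_⟩⟩⟩
  · rw [Linear.comp_smul, hcp, smul_smul, inv_mul_cancel₀ hp, one_smul]
  · rw [Linear.smul_comp, hc', hcc, smul_smul, inv_mul_cancel₀ hp, one_smul]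

lemma generates_map {E F : T} (tF : SphericalTwist F) {k : ℤ}
    (hk : Nonempty ((tF.Φ.obj E : T) ≅ E⟦k⟧)) {G : T} (hG : Generates E G) :
    Generates E (tF.Φ.obj G) := by
  haveI := tF.equiv
  letI := tF.commShift
  haveI : tF.Φ.IsTriangulated := tF.triangulated
  induction hG with
  | self => exact Generates.of_iso hk.some.symm (Generates.shift E k Generates.self)
  | of_iso e _ ih => exact Generates.of_iso (tF.Φ.mapIso e) ih
  | shift G n _ ih =>
    exact Generates.of_iso ((tF.Φ.commShiftIso n).app G).symm (Generates.shift _ n ih)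
  | ext Tr hTr _ _ ih1 ih3 => exact Generates.ext _ (tF.Φ.map_distinguished _ hTr) ih1 ih3

lemma generates_unmap {E F : T} (tF : SphericalTwist F) {k : ℤ}
    (hk : Nonempty ((tF.Φ.obj E : T) ≅ E⟦k⟧)) {H : T} (hH : Generates E H) :
    ∀ G : T, (tF.Φ.obj G ≅ H) → Generates E G := by
  haveI := tF.equiv
  letI := tF.commShift
  haveI : tF.Φ.IsTriangulated := tF.triangulated
  induction hH with
  | self =>
    intro G e
    have e2 : tF.Φ.obj ((E⟦-k⟧ : T)) ≅ E :=
      (tF.Φ.commShiftIso (-k)).app E ≪≫ (shiftFunctor T (-k)).mapIso hk.some ≪≫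
        (shiftFunctorCompIsoId T k (-k) (add_neg_cancel k)).app E
    exact Generates.of_iso (tF.Φ.preimageIso (e ≪≫ e2.symm)).symm
      (Generates.shift E (-k) Generates.self)
  | of_iso eiso _ ih =>
    intro G e
    exact ih G (e ≪≫ eiso.symm)
  | shift H n _ ih =>
    intro G e
    have e2 : tF.Φ.obj ((G⟦-n⟧ : T)) ≅ H :=
      (tF.Φ.commShiftIso (-n)).app G ≪≫ (shiftFunctor T (-n)).mapIso e ≪≫
        (shiftFunctorCompIsoId T n (-n) (add_neg_cancel n)).app H
    exact Generates.of_iso ((shiftFunctorCompIsoId T (-n) n (neg_add_cancel n)).app G)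
      (Generates.shift _ n (ih _ e2))
  | ext Tr hTr _ _ ih1 ih3 =>
    intro G e
    set e1 := tF.Φ.objObjPreimageIso Tr.obj₁ with he1
    set u' : tF.Φ.objPreimage Tr.obj₁ ⟶ G := tF.Φ.preimage (e1.hom ≫ Tr.mor₁ ≫ e.inv) with hu'
    obtain ⟨Z, g, h, hT'⟩ := Pretriangulated.distinguished_cocone_triangle u'
    have hmap := tF.Φ.map_distinguished _ hT'
    have hcomm1 : (tF.Φ.mapTriangle.obj (Triangle.mk u' g h)).mor₁ ≫ e.hom =
        e1.hom ≫ Tr.mor₁ := by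
      dsimp [Functor.mapTriangle]
      show tF.Φ.map u' ≫ e.hom = e1.hom ≫ Tr.mor₁
      rw [hu', tF.Φ.map_preimage]
      simp
    obtain ⟨c3, hc31, hc32⟩ := Pretriangulated.complete_distinguished_triangle_morphism
      _ _ hmap hTr e1.hom e.hom hcomm1
    let φ : tF.Φ.mapTriangle.obj (Triangle.mk u' g h) ⟶ Tr :=
      { hom₁ := e1.hom, hom₂ := e.hom, hom₃ := c3,
        comm₁ := hcomm1, comm₂ := hc31, comm₃ := hc32 }
    haveI : IsIso φ.hom₁ := inferInstanceAs (IsIso e1.hom)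
    haveI : IsIso φ.hom₂ := inferInstanceAs (IsIso e.hom)
    haveI hiso3 : IsIso c3 := isIso₃_of_isIso₁₂ φ hmap hTr inferInstance inferInstance
    exact Generates.ext _ hT' (ih1 _ e1) (ih3 _ (@asIso _ _ _ _ c3 hiso3))


/-- Let `X` be a smooth complex projective Calabi-Yau variety of
dimension `d ≥ 2` and let `E`, `F` be spherical objects of `D(X)` whose spherical
twists commute, `Φ_E ∘ Φ_F ≅ Φ_F ∘ Φ_E`.  Then for any object `G` of `D(X)`,
`G ∈ ⟨E⟩` if and only if `Φ_F(G) ∈ ⟨E⟩`. -/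
theorem generated_iff_twist_generated
    [HomFiniteBounded T] (d : ℕ) (hd : 2 ≤ d) [CalabiYau T (d : ℤ)]
    {E F : T} (hE : IsSpherical (d : ℤ) E) (hF : IsSpherical (d : ℤ) F)
    (tE : SphericalTwist E) (tF : SphericalTwist F)
    (hcomm : Nonempty (tF.Φ ⋙ tE.Φ ≅ tE.Φ ⋙ tF.Φ)) :
    ∀ G : T, Generates E G ↔ Generates E (tF.Φ.obj G) := by
  intro G
  obtain ⟨k, hk⟩ := twist_obj_E_iso_shift (d := (d : ℤ)) (by exact_mod_cast hd) hE tE tF hcomm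
  constructor
  · exact generates_map tF hk
  · intro h
    exact generates_unmap tF hk h G (Iso.refl _)

end SphericalPaper
end

section
/- Let E be a simple vector bundle on a smooth complex projective variety X and let x be a closed point of X. Writing E_H = E ⊗_C Hom(E, O_x) and ev : E_H → O_x for the canonical evaluation map, the map Hom(E_H, E_H) → Hom(E_H, O_x) given by composition with ev is injective. -/
/-!
This file formalizes a statement from "Commuting reflection functors and
orthogonal spherical objects".  Mathlib does not have bounded derived categories
of coherent sheaves on smooth projective varieties, so the geometric setting is
axiomatized: `T` plays the role of the bounded derived category `D(X)` of a
smooth complex projective variety `X` — a ℂ-linear triangulated category with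
finite-dimensional, bounded graded Hom's — and the Calabi-Yau condition is
expressed by Serre duality in the form of a perfect trace pairing
`Hom(A,B) × Hom(B,A⟦d⟧) → ℂ`.
-/

open CategoryTheory Limits Pretriangulated Module

universe v u

namespace SphericalPaper

variable (T : Type u) [Category.{v} T] [Preadditive T] [Linear ℂ T]
  [HasZeroObject T] [HasShift T ℤ] [∀ n : ℤ, (shiftFunctor T n).Additive]
  [Pretriangulated T] [HasFiniteBiproducts T]

/-- An abstraction of the coherent-sheaf geometry of a smooth complex
projective variety `X` of dimension `d`, as seen inside its bounded derived
category `T = D(X)`: the closed points of `X` with their skyscraper sheaves,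
the classes of objects which are coherent sheaves, locally free sheaves
(vector bundles) and torsion-free sheaves, ranks, the singularity set of a
sheaf (the locus where it fails to be locally free) and double duals, together
with their standard basic properties. -/
structure VarietyGeometry (d : ℕ) where
  /-- the closed points of `X` -/
  Pt : Type v
  /-- the skyscraper sheaf `𝒪ₓ` at a closed point -/
  sky : Pt → T
  /-- the objects of `T = D(X)` which are coherent sheaves (in degree `0`) -/
  IsSheaf : T → Prop
  /-- the locally free sheaves (vector bundles) -/
  IsLocallyFree : T → Prop
  /-- the torsion-free sheaves -/
  IsTorsionFree : T → Prop
  /-- the rank of a sheaf -/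
  rank : T → ℕ
  /-- the singularity set of a sheaf: the locus where it is not locally free -/
  singSet : T → Set Pt
  /-- the double dual `A ↦ A^{**}` of a sheaf -/
  ddual : T → T
  /-- the canonical map `A → A^{**}` -/
  ddualUnit : ∀ A : T, A ⟶ ddual A
  locallyFree_isSheaf : ∀ A, IsLocallyFree A → IsSheaf A
  locallyFree_isTorsionFree : ∀ A, IsLocallyFree A → IsTorsionFree A
  torsionFree_isSheaf : ∀ A, IsTorsionFree A → IsSheaf A
  sky_isSheaf : ∀ x, IsSheaf (sky x)
  sky_simple : ∀ x, finrank ℂ (sky x ⟶ sky x) = 1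
  sky_orthogonal : ∀ x y, x ≠ y → ∀ (i : ℤ) (f : sky x ⟶ (sky y)⟦i⟧), f = 0
  hom_vanish_neg : ∀ A B, IsSheaf A → IsSheaf B →
    ∀ i : ℤ, i < 0 → ∀ f : A ⟶ B⟦i⟧, f = 0
  hom_vanish_big : ∀ A B, IsSheaf A → IsSheaf B →
    ∀ i : ℤ, (d : ℤ) < i → ∀ f : A ⟶ B⟦i⟧, f = 0
  locallyFree_iff_singSet_empty : ∀ A, IsSheaf A → (IsLocallyFree A ↔ singSet A = ∅)
  hom_sky_rank : ∀ (A : T) (x : Pt), IsLocallyFree A → finrank ℂ (A ⟶ sky x) = rank A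

variable {T}

/-- Let `E` be a simple vector bundle on a smooth complex
projective variety `X` and `x` a closed point of `X`.  Writing
`E_H = E ⊗_ℂ Hom(E, 𝒪ₓ)` (exhibited as the biproduct of `dim Hom(E, 𝒪ₓ)` copies
of `E` via a basis `b` of `Hom(E, 𝒪ₓ)`) and `ev : E_H → 𝒪ₓ` for the canonical
evaluation map, the map `Hom(E_H, E_H) → Hom(E_H, 𝒪ₓ)` given by composition with
`ev` is injective. -/
theorem comp_evaluation_injective
    [HomFiniteBounded T] (d : ℕ) (G : VarietyGeometry T d)
    (E : T) (hE : G.IsLocallyFree E) (hsimple : finrank ℂ (E ⟶ E) = 1)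
    (x : G.Pt) (b : Basis (Fin (finrank ℂ (E ⟶ G.sky x))) ℂ (E ⟶ G.sky x)) :
    Function.Injective
      (fun g : (⨁ fun _ : Fin (finrank ℂ (E ⟶ G.sky x)) => E) ⟶
          (⨁ fun _ : Fin (finrank ℂ (E ⟶ G.sky x)) => E) =>
        g ≫ biproduct.desc fun j => b j) := by
  -- `𝟙 E ≠ 0` since `Hom(E,E)` is 1-dimensional
  have hone : (𝟙 E : E ⟶ E) ≠ 0 := by
    intro h
    have hall : ∀ f : E ⟶ E, f = 0 := fun f => by
      rw [← Category.comp_id f, h, comp_zero]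
    have : Subsingleton (E ⟶ E) := ⟨fun a c => by rw [hall a, hall c]⟩
    have := finrank_zero_of_subsingleton (R := ℂ) (M := (E ⟶ E))
    omega
  have hscalar : ∀ f : E ⟶ E, ∃ c : ℂ, f = c • 𝟙 E := by
    intro f
    obtain ⟨c, hc⟩ := (finrank_eq_one_iff_of_nonzero' (𝟙 E) hone).mp hsimple f
    exact ⟨c, hc.symm⟩
  intro g g' h
  simp only at h
  set k := g - g' with hk
  have hsub : k ≫ biproduct.desc (fun j => b j) = 0 := by
    rw [hk, Preadditive.sub_comp, h, sub_self]
  choose c hc using fun i j =>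
    hscalar (biproduct.ι (fun _ : Fin (finrank ℂ (E ⟶ G.sky x)) => E) i ≫ k ≫
      biproduct.π (fun _ : Fin (finrank ℂ (E ⟶ G.sky x)) => E) j)
  have hrow : ∀ i, ∑ j, c i j • (b j : E ⟶ G.sky x) = 0 := by
    intro i
    have h1 : biproduct.ι (fun _ : Fin (finrank ℂ (E ⟶ G.sky x)) => E) i ≫
        (k ≫ biproduct.desc fun j => b j) = 0 := by rw [hsub, comp_zero]
    calc ∑ j, c i j • (b j : E ⟶ G.sky x)
        = ∑ j, (biproduct.ι _ i ≫ k ≫ biproduct.π _ j) ≫ b j := by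
          refine Finset.sum_congr rfl fun j _ => ?_
          rw [hc i j, Linear.smul_comp, Category.id_comp]
      _ = biproduct.ι _ i ≫ (k ≫ biproduct.desc fun j => b j) := by
          rw [biproduct.desc_eq]
          simp [Preadditive.comp_sum, Category.assoc]
      _ = 0 := h1
  have hc0 : ∀ i j, c i j = 0 := by
    intro i j
    have hli := b.linearIndependent
    have := linearIndependent_iff'.mp hli Finset.univ (c i) (hrow i) j
      (Finset.mem_univ j)
    exact this
  have hk0 : k = 0 := by
    apply biproduct.hom_ext'
    intro i
    apply biproduct.hom_ext
    intro j
    simp [Category.assoc, hc i j, hc0 i j]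
  exact sub_eq_zero.mp hk0

end SphericalPaper
end
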